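/- If A is an extended finite automaton over some group with L(A) = { aⁿbⁿ : n ≥ 1 }, then gmc_A(n) ∈ Ω(n): there is a constant d > 0 such that gmc_A(n) ≥ d·n for infinitely many n. -/

import Mathlib

open scoped Classical

/-- An extended finite automaton (EFA) over a group `M`, with input alphabet `V`:
a finite automaton whose transitions additionally multiply a group register by elements
of `M`. -/
structure EFA (V M : Type) [Group M] where
  /-- States. -/
  Q : Type
  [fQ : Fintype Q]
  /-- Transition function: finitely many (state, group element) pairs per state and letter. -/
  δ : Q → V → Set (Q × M)
  fin : ∀ q a, (δ q a).Finite
  /-- Initial state. -/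
  q₀ : Q
  /-- Final states. -/
  F : Set Q

variable {V M : Type} [Group M]

/-- `A.Steps c c' k` : the EFA `A` goes from configuration `c` (state, remaining input,
register) to configuration `c'` using exactly `k` transitions whose group element is not the
identity. -/
inductive EFA.Steps (A : EFA V M) :
    A.Q × List V × M → A.Q × List V × M → ℕ → Prop
  | refl (c : A.Q × List V × M) : Steps A c c 0
  | step {s : A.Q} {r : M} {q : A.Q} {w : List V} {m : M} {c : A.Q × List V × M} {k : ℕ}
      {a : V} (h : (s, r) ∈ A.δ q a) (ih : Steps A (s, w, m * r) c k) :
      Steps A (q, a :: w, m) c (if r = 1 then k else k + 1)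

namespace EFA
attribute [instance] EFA.fQ
variable {A : EFA V M}

lemma Steps.trans {c₁ c₂ c₃ : A.Q × List V × M} {k₁ k₂ : ℕ}
    (h₁ : A.Steps c₁ c₂ k₁) (h₂ : A.Steps c₂ c₃ k₂) : A.Steps c₁ c₃ (k₁ + k₂) := by
  induction h₁ with
  | refl => simpa using h₂
  | @step s r q w m c k a h tail ih =>
    have H := Steps.step h (ih h₂)
    rcases eq_or_ne r 1 with h1 | h1
    · simpa [h1] using H
    · have : k + 1 + k₂ = k + k₂ + 1 := by omega
      simpa [h1, this] using H

lemma Steps.length_le {c₁ c₂ : A.Q × List V × M} {k : ℕ} (h : A.Steps c₁ c₂ k) :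
    c₂.2.1.length ≤ c₁.2.1.length := by
  induction h with
  | refl => exact le_rfl
  | step h tail ih => simpa using Nat.le_succ_of_le ih

lemma Steps.replace {c₁ c₂ : A.Q × List V × M} {k : ℕ} (h : A.Steps c₁ c₂ k) :
    ∀ u y : List V, c₁.2.1 = u ++ c₂.2.1 →
      A.Steps (c₁.1, u ++ y, c₁.2.2) (c₂.1, y, c₂.2.2) k := by
  induction h with
  | refl c =>
    intro u y hu
    have : u = [] := by
      have := congrArg List.length hu
      simpa using this
    subst this
    exact Steps.refl _
  | @step s r q w m c k a h tail ih =>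
    intro u y hu
    match u, hu with
    | [], hu =>
      exfalso
      have hl := tail.length_le
      have := congrArg List.length hu
      simp at this hl
      omega
    | b :: u', hu =>
      simp only [List.cons_append, List.cons.injEq] at hu
      obtain ⟨rfl, hw⟩ := hu
      exact Steps.step h (ih u' y hw)



/-- One transition, tracking accumulated count. -/
def R (A : EFA V M) : (A.Q × List V × M) × ℕ → (A.Q × List V × M) × ℕ → Prop :=
  fun p p' => ∃ a r, (p'.1.1, r) ∈ A.δ p.1.1 a ∧ p.1.2.1 = a :: p'.1.2.1 ∧
    p'.1.2.2 = p.1.2.2 * r ∧ p'.2 = p.2 + (if r = 1 then 0 else 1)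

lemma steps_to_rtg {c c' : A.Q × List V × M} {k : ℕ} (h : A.Steps c c' k) :
    ∀ j, Relation.ReflTransGen (R A) (c, j) (c', j + k) := by
  induction h with
  | refl => intro j; exact Relation.ReflTransGen.refl
  | @step s r q w m c k a h tail ih =>
    intro j
    have h1 : R A ((q, a :: w, m), j) ((s, w, m * r), j + (if r = 1 then 0 else 1)) :=
      ⟨a, r, h, rfl, rfl, rfl⟩
    have h2 := ih (j + (if r = 1 then 0 else 1))
    have : j + (if r = 1 then 0 else 1) + k = j + (if r = 1 then k else k + 1) := by
      split <;> omega
    rw [this] at h2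
    exact Relation.ReflTransGen.head h1 h2

lemma rtg_to_steps {p p' : (A.Q × List V × M) × ℕ}
    (h : Relation.ReflTransGen (R A) p p') : ∃ k, p'.2 = p.2 + k ∧ A.Steps p.1 p'.1 k := by
  induction h using Relation.ReflTransGen.head_induction_on with
  | refl => exact ⟨0, by simp, EFA.Steps.refl _⟩
  | head hr _ ih =>
    rename_i x b _
    obtain ⟨k, hk, hs⟩ := ih
    obtain ⟨a, r, hmem, hw, hreg, hcnt⟩ := hr
    obtain ⟨⟨qx, wx, mx⟩, jx⟩ := x
    obtain ⟨⟨qb, wb, mb⟩, jb⟩ := b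
    simp only at hw hreg hmem hcnt hk hs ⊢
    subst hw hreg
    refine ⟨(if r = 1 then 0 else 1) + k, by omega, ?_⟩
    have H := EFA.Steps.step (A := A) hmem hs
    rcases eq_or_ne r 1 with h1 | h1
    · simpa [h1] using H
    · simpa [h1, Nat.add_comm] using H

lemma drop_repl {x : V} {n i : ℕ} (v : List V) (hi : i ≤ n) :
    (List.replicate n x ++ v).drop i = List.replicate (n - i) x ++ v := by
  conv_lhs => rw [show n = i + (n - i) by omega, List.replicate_add, List.append_assoc]
  exact List.drop_left' (by simp)

lemma pump {x : V} {n : ℕ} {v : List V} {q qf : A.Q} {m m' : M} {K : ℕ}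
    (h : A.Steps (q, List.replicate n x ++ v, m) (qf, [], m') K)
    (hn : Fintype.card A.Q * (K + 1) ≤ n) :
    ∃ n' < n, ∃ K', A.Steps (q, List.replicate n' x ++ v, m) (qf, [], m') K' := by
  set W : List V := List.replicate n x ++ v with hW
  have h0 := steps_to_rtg h 0
  obtain ⟨l, hchain, hlast⟩ := List.exists_isChain_cons_of_relationReflTransGen h0
  set L : List ((A.Q × List V × M) × ℕ) := ((q, W, m), 0) :: l with hL
  set G : ℕ → ((A.Q × List V × M) × ℕ) := fun i => L.getD i ((qf, [], m'), K) with hG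
  have hG0 : G 0 = ((q, W, m), 0) := rfl
  have hGlast : G (L.length - 1) = ((qf, [], m'), K) := by
    have hlt : L.length - 1 < L.length := by simp [hL]
    show L.getD (L.length - 1) ((qf, [], m'), K) = ((qf, [], m'), K)
    rw [List.getD_eq_getElem _ _ hlt]
    rw [← List.getLast_eq_getElem (l := L) (by simp [hL])]
    simpa using hlast
  have hadjG : ∀ i, i + 1 < L.length → R A (G i) (G (i + 1)) := by
    intro i hi
    have hiL : i < L.length := by omega
    have := List.isChain_iff_getElem.mp hchain i hi
    simp only [hG, List.getD_eq_getElem _ _ hiL, List.getD_eq_getElem _ _ hi]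
    exact this
  have hword : ∀ i, i < L.length → (G i).1.2.1 = W.drop i := by
    intro i
    induction i with
    | zero => intro _; rfl
    | succ i ih =>
      intro hi
      obtain ⟨a, r, _, hw, _, _⟩ := hadjG i hi
      rw [ih (by omega)] at hw
      rw [← List.tail_drop, hw, List.tail_cons]
  have hlen : L.length = W.length + 1 := by
    have h1 := hword (L.length - 1) (by simp [hL])
    rw [hGlast] at h1
    have h2 : W.length ≤ L.length - 1 := by
      by_contra h2
      have : W.drop (L.length - 1) ≠ [] := by
        apply List.ne_nil_of_length_pos
        rw [List.length_drop]; omega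
      exact this h1.symm
    rcases Nat.lt_or_ge (W.length + 1) L.length with hlt | hge
    · exfalso
      obtain ⟨a, r, _, hw, _, _⟩ := hadjG W.length hlt
      rw [hword W.length (by omega), List.drop_length] at hw
      exact List.cons_ne_nil _ _ hw.symm
    · have : 0 < L.length := by simp [hL]
      omega
  have hmono : ∀ s t, s ≤ t → t < L.length → (G s).2 ≤ (G t).2 := by
    intro s t hst
    induction t, hst using Nat.le_induction with
    | base => intro _; exact le_rfl
    | succ t hst ih =>
      intro hlt
      obtain ⟨a, r, _, _, _, hc⟩ := hadjG t hlt
      have := ih (by omega)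
      rw [hc]; omega
  have hWlen : W.length = n + v.length := by simp [hW]
  have hKbound : ∀ i, i < L.length → (G i).2 ≤ K := by
    intro i hi
    have := hmono i (L.length - 1) (by omega) (by omega)
    rwa [hGlast] at this
  -- pigeonhole
  have hQpos : 0 < Fintype.card A.Q := Fintype.card_pos_iff.mpr ⟨q⟩
  set f : Fin (n + 1) → A.Q × Fin (K + 1) := fun i =>
    ((G i).1.1, ⟨(G i).2, Nat.lt_succ_of_le (hKbound i (by have h2 := i.2; omega))⟩) with hf
  have hcard : Fintype.card (A.Q × Fin (K + 1)) < Fintype.card (Fin (n + 1)) := by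
    simp only [Fintype.card_prod, Fintype.card_fin]
    omega
  obtain ⟨i0, j0, hne, hfeq0⟩ := Fintype.exists_ne_map_eq_of_card_lt f hcard
  have hfacts : ∀ a b : Fin (n + 1), f a = f b →
      (G ↑a).1.1 = (G ↑b).1.1 ∧ (G ↑a).2 = (G ↑b).2 := by
    intro a b hab
    have h1 := congrArg Prod.fst hab
    have h2 := congrArg (fun p => ((p.2 : Fin (K + 1)) : ℕ)) hab
    simp only [hf] at h1 h2
    exact ⟨h1, h2⟩
  obtain ⟨I, J, hIJ, hJn, hstate, hcnteq⟩ :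
      ∃ I J : ℕ, I < J ∧ J ≤ n ∧ (G I).1.1 = (G J).1.1 ∧ (G I).2 = (G J).2 := by
    rcases lt_or_gt_of_ne hne with hlt | hgt
    · obtain ⟨h1, h2⟩ := hfacts i0 j0 hfeq0
      exact ⟨i0, j0, hlt, by have := j0.2; omega, h1, h2⟩
    · obtain ⟨h1, h2⟩ := hfacts j0 i0 hfeq0.symm
      exact ⟨j0, i0, hgt, by have := i0.2; omega, h1, h2⟩
  -- registers equal
  have hregeq : ∀ t, I ≤ t → t ≤ J → (G t).2 = (G I).2 ∧ (G t).1.2.2 = (G I).1.2.2 := by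
    intro t hIt
    induction t, hIt using Nat.le_induction with
    | base => intro _; exact ⟨rfl, rfl⟩
    | succ t hIt ih =>
      intro htJ
      obtain ⟨hc, hr⟩ := ih (by omega)
      obtain ⟨a, r, _, _, hrs, hcs⟩ := hadjG t (by omega)
      have hr1 : r = 1 := by
        by_contra hr1
        have hle := hmono (t + 1) J (by omega) (by omega)
        rw [← hcnteq] at hle
        simp [hr1] at hcs
        omega
      refine ⟨by rw [hcs, hr1]; simp [hc], by rw [hrs, hr1, mul_one, hr]⟩
  -- segments
  have hrtg : ∀ s t, s ≤ t → t < L.length → Relation.ReflTransGen (R A) (G s) (G t) := by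
    intro s t hst
    induction t, hst using Nat.le_induction with
    | base => intro _; exact Relation.ReflTransGen.refl
    | succ t hst ih =>
      intro hlt
      exact (ih (by omega)).tail (hadjG t hlt)
  have hpreR := hrtg 0 I (by omega) (by omega)
  rw [hG0] at hpreR
  obtain ⟨k₁, _, hpre⟩ := rtg_to_steps hpreR
  have hsufR := hrtg J (L.length - 1) (by omega) (by omega)
  rw [hGlast] at hsufR
  obtain ⟨k₂, _, hsuf⟩ := rtg_to_steps hsufR
  -- words at I and J
  have hwI : (G I).1.2.1 = List.replicate (n - I) x ++ v := by
    rw [hword I (by omega), hW, drop_repl v (by omega)]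
  have hwJ : (G J).1.2.1 = List.replicate (n - J) x ++ v := by
    rw [hword J (by omega), hW, drop_repl v (by omega)]
  -- surgery
  have hdec : W = List.replicate I x ++ (G I).1.2.1 := by
    rw [hwI, hW, ← List.append_assoc, ← List.replicate_add,
      show I + (n - I) = n by omega]
  have hpre' := hpre.replace (List.replicate I x) (List.replicate (n - J) x ++ v) hdec
  have hGJ1 : (G J).1 = ((G I).1.1, List.replicate (n - J) x ++ v, (G I).1.2.2) := by
    obtain ⟨hc2, hr2⟩ := hregeq J (by omega) le_rfl
    exact Prod.ext hstate.symm (Prod.ext hwJ hr2)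
  rw [hGJ1] at hsuf
  have hcomb := hpre'.trans hsuf
  refine ⟨I + (n - J), by omega, k₁ + k₂, ?_⟩
  rwa [← List.append_assoc, ← List.replicate_add] at hcomb

end EFA

/-- The word `w` is accepted using exactly `k` non-identity group elements: starting from the
initial state with register `1`, the whole input is read and a final state is reached with
register `1`. -/
def EFA.AcceptsN (A : EFA V M) (w : List V) (k : ℕ) : Prop :=
  ∃ q ∈ A.F, A.Steps (A.q₀, w, 1) (q, [], 1) k

/-- The language accepted by an EFA. -/
def EFA.language (A : EFA V M) : Language V := {w | ∃ k, A.AcceptsN w k}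

/-- Group memory complexity of a word: the minimal number of non-identity group elements used
over all accepting computations (`0` if the word is not accepted). -/
noncomputable def EFA.gmcW (A : EFA V M) (w : List V) : ℕ :=
  sInf {k | A.AcceptsN w k}

/-- Group memory complexity of the EFA: maximum over words of length `n`. -/
noncomputable def EFA.gmcFun (A : EFA V M) (n : ℕ) : ℕ :=
  sSup {m | ∃ w : List V, w.length = n ∧ A.gmcW w = m}

/-- `f ∈ O(h)` for `ℕ`-valued functions. -/
def InO (f h : ℕ → ℕ) : Prop := ∃ c : ℕ, ∀ n, f n ≤ c * h n + c

/-- `f ∈ Ω(n)`: there is a rational constant `1/c > 0` with `f n ≥ n/c` for infinitely many `n`. -/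
def InOmegaLinear (f : ℕ → ℕ) : Prop := ∃ c : ℕ, 0 < c ∧ ∀ m : ℕ, ∃ n ≥ m, n ≤ c * f n

/-- If an EFA over some group accepts `{ aⁿbⁿ : n ≥ 1 }` (with `a = 0`, `b = 1` in `Fin 2`),
then its group memory complexity is in `Ω(n)`. -/
theorem efa_anbn_gmc_omega_linear (M : Type) [Group M] (A : EFA (Fin 2) M)
    (hA : A.language =
      {w : List (Fin 2) | ∃ n : ℕ, 1 ≤ n ∧ w = List.replicate n 0 ++ List.replicate n 1}) :
    InOmegaLinear A.gmcFun := by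
  
  classical
  set Qc := Fintype.card A.Q with hQc
  have hQpos : 0 < Qc := Fintype.card_pos_iff.mpr ⟨A.q₀⟩
  refine ⟨4 * Qc, by omega, ?_⟩
  intro m0
  set N := max m0 Qc with hN
  have hNQ : Qc ≤ N := le_max_right _ _
  have hN1 : 1 ≤ N := le_trans hQpos hNQ
  set w : List (Fin 2) := List.replicate N 0 ++ List.replicate N 1 with hw
  have hwlen : w.length = 2 * N := by rw [hw]; simp; omega
  have hwL : w ∈ A.language := by rw [hA]; exact ⟨N, hN1, rfl⟩
  obtain ⟨k0, hk0⟩ := hwL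
  have hne : {k | A.AcceptsN w k}.Nonempty := ⟨k0, hk0⟩
  set K := A.gmcW w with hK
  have hKmem : A.AcceptsN w K := Nat.sInf_mem hne
  obtain ⟨qf, hqf, hsteps⟩ := hKmem
  rw [hw] at hsteps
  have hbig : N < Qc * (K + 1) := by
    by_contra hle
    push_neg at hle
    obtain ⟨n', hn', K', hsteps'⟩ := EFA.pump hsteps hle
    have hmem : List.replicate n' (0 : Fin 2) ++ List.replicate N 1 ∈ A.language :=
      ⟨K', qf, hqf, hsteps'⟩
    rw [hA] at hmem
    obtain ⟨p, hp1, hpeq⟩ := hmem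
    have hc1 := congrArg (List.count 1) hpeq
    have hc0 := congrArg (List.count 0) hpeq
    simp [List.count_append, List.count_replicate] at hc1 hc0
    omega
  have hK1 : 1 ≤ K := by
    by_contra hk
    push_neg at hk
    have hK0 : K = 0 := by omega
    rw [hK0] at hbig
    simp at hbig
    omega
  have hbdd : BddAbove {m | ∃ w' : List (Fin 2), w'.length = 2 * N ∧ A.gmcW w' = m} := by
    have hfin : {w' : List (Fin 2) | w'.length = 2 * N}.Finite := List.finite_length_eq _ _
    have heq : {m | ∃ w' : List (Fin 2), w'.length = 2 * N ∧ A.gmcW w' = m}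
        = A.gmcW '' {w' | w'.length = 2 * N} := by
      ext k; simp [Set.mem_image]
    rw [heq]
    exact (hfin.image _).bddAbove
  have hle : K ≤ A.gmcFun (2 * N) := le_csSup hbdd ⟨w, hwlen, hK.symm⟩
  refine ⟨2 * N, by have := le_max_left m0 Qc; omega, ?_⟩
  have h1 : Qc * (K + 1) ≤ Qc * (2 * A.gmcFun (2 * N)) :=
    Nat.mul_le_mul_left _ (by omega)
  calc 2 * N ≤ 2 * (Qc * (2 * A.gmcFun (2 * N))) :=
        Nat.mul_le_mul_left _ (le_of_lt (lt_of_lt_of_le hbig h1))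
    _ = 4 * Qc * A.gmcFun (2 * N) := by ring
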